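/- Equip ℕ with the topology in which a set is open if and only if it is downward closed, and let E = {n ∈ ℕ : n is even}. Then the smallest family of subsets of ℕ containing E and closed under topological closure, complement, and binary intersection is infinite. Consequently, there is a topological space and a single subset from which the operations closure, complement, and intersection generate infinitely many distinct sets. -/
import Mathlib


/-- The topology on `ℕ` in which a set is open if and only if it is downward closed
(the lower Alexandrov topology of the usual order). -/
def lowerTopology : TopologicalSpace ℕ where
  IsOpen U := ∀ ⦃m n : ℕ⦄, n ∈ U → m ≤ n → m ∈ U
  isOpen_univ := fun _ _ _ _ => trivial
  isOpen_inter := fun _ _ hs ht _ _ hn hmn => ⟨hs hn.1 hmn, ht hn.2 hmn⟩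
  isOpen_sUnion := fun _ hS _ _ hn hmn => by
    obtain ⟨s, hsS, hns⟩ := hn
    exact ⟨s, hsS, hS s hsS hns hmn⟩

/-- The family of subsets of `ℕ` generated from the set `E` of even numbers by successive
applications of closure (in the lower topology), complement, and binary intersection:
the smallest collection of subsets of `ℕ` containing `E` and closed under these operations. -/
inductive kcwGenEven : Set ℕ → Prop
  | base : kcwGenEven {n : ℕ | Even n}
  | closure {A : Set ℕ} : kcwGenEven A → kcwGenEven (@closure ℕ lowerTopology A)
  | compl {A : Set ℕ} : kcwGenEven A → kcwGenEven Aᶜ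
  | inter {A B : Set ℕ} : kcwGenEven A → kcwGenEven B → kcwGenEven (A ∩ B)

lemma lower_closure_eq (A : Set ℕ) :
    @closure ℕ lowerTopology A = {m | ∃ n ∈ A, n ≤ m} := by
  letI : TopologicalSpace ℕ := lowerTopology
  apply le_antisymm
  · apply closure_minimal (t := {m | ∃ n ∈ A, n ≤ m}) (fun n hn => ⟨n, hn, le_refl n⟩)
    constructor
    intro m n hn hmn
    simp only [Set.mem_compl_iff, Set.mem_setOf_eq] at *
    intro ⟨k, hk, hkm⟩
    exact hn ⟨k, hk, hkm.trans hmn⟩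
  · rintro m ⟨n, hn, hnm⟩
    have hcl : IsClosed (closure A) := isClosed_closure
    have hopen := hcl.isOpen_compl
    by_contra hm
    exact (hopen hm hnm) (subset_closure hn)

lemma lower_closure_Ici_min {A : Set ℕ} {k : ℕ} (hkA : k ∈ A) (hA : A ⊆ Set.Ici k) :
    @closure ℕ lowerTopology A = Set.Ici k := by
  rw [lower_closure_eq]
  ext m
  constructor
  · rintro ⟨n, hn, hnm⟩; exact le_trans (hA hn) hnm
  · intro hm; exact ⟨k, hkA, hm⟩

lemma kcw_Ici : ∀ k : ℕ, kcwGenEven (Set.Ici (k + 1)) := by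
  have hE : kcwGenEven {n : ℕ | Even n} := kcwGenEven.base
  have hO : kcwGenEven {n : ℕ | Even n}ᶜ := hE.compl
  intro k
  induction k with
  | zero =>
    have : @closure ℕ lowerTopology {n : ℕ | Even n}ᶜ = Set.Ici 1 := by
      apply lower_closure_Ici_min
      · simp [Nat.even_iff]
      · intro n hn
        simp only [Set.mem_compl_iff, Set.mem_setOf_eq, Nat.even_iff] at hn
        simp only [Set.mem_Ici]
        omega
    exact this ▸ hO.closure
  | succ k ih =>
    rcases Nat.even_or_odd (k + 1) with he | ho
    · -- k+1 even, so intersect with odds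
      have h := hO.inter ih
      have : @closure ℕ lowerTopology ({n : ℕ | Even n}ᶜ ∩ Set.Ici (k + 1))
          = Set.Ici (k + 2) := by
        apply lower_closure_Ici_min
        · constructor
          · simp only [Set.mem_compl_iff, Set.mem_setOf_eq, Nat.even_iff] at he ⊢; omega
          · simp
        · rintro n ⟨hn1, hn2⟩
          simp only [Set.mem_compl_iff, Set.mem_setOf_eq, Nat.even_iff] at hn1 he
          simp only [Set.mem_Ici] at hn2 ⊢
          omega
      exact this ▸ h.closure
    · have h := hE.inter ih
      have : @closure ℕ lowerTopology ({n : ℕ | Even n} ∩ Set.Ici (k + 1))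
          = Set.Ici (k + 2) := by
        apply lower_closure_Ici_min
        · constructor
          · simp only [Set.mem_setOf_eq, Nat.even_iff, Nat.odd_iff] at ho ⊢; omega
          · simp
        · rintro n ⟨hn1, hn2⟩
          simp only [Set.mem_setOf_eq, Nat.even_iff, Nat.odd_iff] at hn1 ho
          simp only [Set.mem_Ici] at hn2 ⊢
          omega
      exact this ▸ h.closure

/-- The smallest family of subsets of `ℕ` (with the lower topology) containing the even
numbers and closed under closure, complement, and binary intersection is infinite: closure,
complement, and intersection can generate infinitely many distinct sets from a single set. -/
theorem kcwGenEven_infinite : {A : Set ℕ | kcwGenEven A}.Infinite := by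
  apply Set.infinite_of_injective_forall_mem (f := fun k : ℕ => Set.Ici (k + 1))
    (hi := ?_) (hf := fun k => kcw_Ici k)
  intro a b hab
  simp only [Set.ext_iff, Set.mem_Ici] at hab
  have h1 := hab (a+1); have h2 := hab (b+1)
  omega
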